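/- Assume the bound |ψ(x) − x| < (1/(8π)) x^{1/2} (log x)² holds for all x ≥ x₀. Then for every β > 1/2 there exists x₁ ≥ x₀ such that for all x ≥ x₁ the interval (x, x + x^β] contains a prime power p^n with n ≥ 1, i.e., ψ(x + x^β) − ψ(x) > 0. -/

import Mathlib

open Finset Real

noncomputable def psi (x : ℝ) : ℝ :=
  ∑ n ∈ Finset.Icc 1 ⌊x⌋₊, ArithmeticFunction.vonMangoldt n

lemma psi_mono : Monotone psi := fun a b hab =>
  Finset.sum_le_sum_of_subset_of_nonneg
    (Finset.Icc_subset_Icc_right (Nat.floor_mono hab))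
    (fun i _ _ => ArithmeticFunction.vonMangoldt_nonneg)

theorem stmt_9 (x₀ : ℝ) (hx₀ : 2 ≤ x₀)
    (h : ∀ x : ℝ, x₀ ≤ x → |psi x - x| < (1/(8*Real.pi)) * x ^ ((1:ℝ)/2) * (Real.log x) ^ 2) :
    ∀ β : ℝ, 1/2 < β →
      ∃ x₁ : ℝ, x₀ ≤ x₁ ∧ ∀ x : ℝ, x₁ ≤ x → 0 < psi (x + x ^ β) - psi x := by
  intro β hβ
  set γ : ℝ := min β (3/4) with hγdef
  have hγβ : γ ≤ β := min_le_left _ _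
  have hγ1 : γ ≤ 1 := le_trans (min_le_right _ _) (by norm_num)
  have hγhalf : 1/2 < γ := lt_min hβ (by norm_num)
  set ε : ℝ := γ - 1/2 with hεdef
  have hε : 0 < ε := by simp only [hεdef]; linarith
  have hlo : (fun x => Real.log x ^ 2) =o[Filter.atTop]
      fun x => (x ^ (ε/2)) ^ 2 :=
    (isLittleO_log_rpow_atTop (by positivity : (0:ℝ) < ε/2)).pow (by norm_num)
  obtain ⟨a, ha⟩ := Filter.eventually_atTop.mp (hlo.def (by norm_num : (0:ℝ) < 1/2))
  refine ⟨max a (max x₀ 2), le_trans (le_max_left _ _) (le_max_right _ _), ?_⟩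
  intro x hx
  have hxa : a ≤ x := le_trans (le_max_left _ _) hx
  have hx0 : x₀ ≤ x := le_trans (le_trans (le_max_left _ _) (le_max_right _ _)) hx
  have hx2 : (2:ℝ) ≤ x := le_trans (le_trans (le_max_right _ _) (le_max_right _ _)) hx
  have hx1 : (1:ℝ) ≤ x := by linarith
  have hxpos : (0:ℝ) < x := by linarith
  -- key log bound
  have hlog : Real.log x ^ 2 < x ^ ε := by
    have h1 := ha x hxa
    have hsq : (x ^ (ε/2)) ^ 2 = x ^ ε := by
      rw [← Real.rpow_natCast (x ^ (ε/2)) 2, ← Real.rpow_mul hxpos.le]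
      norm_num
    rw [Real.norm_eq_abs, Real.norm_eq_abs, abs_of_nonneg (sq_nonneg _),
      abs_of_nonneg (sq_nonneg _), hsq] at h1
    have hxε : 0 < x ^ ε := Real.rpow_pos_of_pos hxpos _
    linarith
  have hγx : x ^ γ ≤ x := by
    calc x ^ γ ≤ x ^ (1:ℝ) := Real.rpow_le_rpow_of_exponent_le hx1 hγ1
    _ = x := Real.rpow_one x
  have hγpos : 0 < x ^ γ := Real.rpow_pos_of_pos hxpos _
  have hβx : x ^ γ ≤ x ^ β := Real.rpow_le_rpow_of_exponent_le hx1 hγβ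
  set y : ℝ := x + x ^ γ with hydef
  have hyx : x ≤ y := by simp only [hydef]; linarith
  have hy2 : y ≤ 2 * x := by simp only [hydef]; linarith
  have hypos : 0 < y := by linarith
  have h1 := abs_lt.mp (h x hx0)
  have h2 := abs_lt.mp (h y (by linarith))
  have hmono : psi y ≤ psi (x + x ^ β) := psi_mono (by simp only [hydef]; linarith)
  -- error bounds
  have hxhalf : 0 < x ^ ((1:ℝ)/2) := Real.rpow_pos_of_pos hxpos _
  have hsqrt : y ^ ((1:ℝ)/2) ≤ 2 * x ^ ((1:ℝ)/2) := by
    calc y ^ ((1:ℝ)/2) ≤ (2*x) ^ ((1:ℝ)/2) :=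
          Real.rpow_le_rpow hypos.le hy2 (by norm_num)
    _ = (2:ℝ) ^ ((1:ℝ)/2) * x ^ ((1:ℝ)/2) := Real.mul_rpow (by norm_num) hxpos.le
    _ ≤ 2 * x ^ ((1:ℝ)/2) := by
        have h22 : (2:ℝ) ^ ((1:ℝ)/2) ≤ 2 := by
          calc (2:ℝ) ^ ((1:ℝ)/2) ≤ (2:ℝ) ^ (1:ℝ) :=
                Real.rpow_le_rpow_of_exponent_le (by norm_num) (by norm_num)
          _ = 2 := Real.rpow_one 2
        exact mul_le_mul_of_nonneg_right h22 hxhalf.le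
  have hlogx : 0 ≤ Real.log x := Real.log_nonneg hx1
  have hlogy0 : 0 ≤ Real.log y := Real.log_nonneg (by linarith)
  have hlogy : Real.log y ≤ 2 * Real.log x := by
    calc Real.log y ≤ Real.log (2*x) := Real.log_le_log hypos hy2
    _ = Real.log 2 + Real.log x := Real.log_mul (by norm_num) (by positivity)
    _ ≤ 2 * Real.log x := by
        have : Real.log 2 ≤ Real.log x := Real.log_le_log (by norm_num) hx2
        linarith
  have hlogy2 : Real.log y ^ 2 ≤ 4 * Real.log x ^ 2 := by nlinarith
  have hπ : (3:ℝ) < Real.pi := Real.pi_gt_three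
  have hπpos : (0:ℝ) < 1/(8*Real.pi) := by positivity
  have hEy : (1/(8*Real.pi)) * y ^ ((1:ℝ)/2) * Real.log y ^ 2 ≤
      (1/(8*Real.pi)) * (2 * x ^ ((1:ℝ)/2)) * (4 * Real.log x ^ 2) := by
    have hy12 : 0 ≤ y ^ ((1:ℝ)/2) := (Real.rpow_pos_of_pos hypos _).le
    gcongr
  -- main gain
  have hgain : x ^ ((1:ℝ)/2) * Real.log x ^ 2 < x ^ γ := by
    have : x ^ γ = x ^ ((1:ℝ)/2) * x ^ ε := by
      rw [← Real.rpow_add hxpos, hεdef]; ring_nf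
    rw [this]
    exact mul_lt_mul_of_pos_left hlog hxhalf
  have hcoef : (1/(8*Real.pi)) * (2 * x ^ ((1:ℝ)/2)) * (4 * Real.log x ^ 2)
      + (1/(8*Real.pi)) * x ^ ((1:ℝ)/2) * Real.log x ^ 2
      ≤ x ^ ((1:ℝ)/2) * Real.log x ^ 2 := by
    have hX : 0 ≤ x ^ ((1:ℝ)/2) * Real.log x ^ 2 := by positivity
    have h9 : (9:ℝ)/(8*Real.pi) ≤ 1 := by
      rw [div_le_one (by positivity)]; linarith
    calc (1/(8*Real.pi)) * (2 * x ^ ((1:ℝ)/2)) * (4 * Real.log x ^ 2)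
        + (1/(8*Real.pi)) * x ^ ((1:ℝ)/2) * Real.log x ^ 2
        = (9/(8*Real.pi)) * (x ^ ((1:ℝ)/2) * Real.log x ^ 2) := by ring
    _ ≤ 1 * (x ^ ((1:ℝ)/2) * Real.log x ^ 2) := mul_le_mul_of_nonneg_right h9 hX
    _ = x ^ ((1:ℝ)/2) * Real.log x ^ 2 := one_mul _
  have hyx' : y - x = x ^ γ := by simp [hydef]
  linarith [h1.2, h2.1, hmono, hEy, hcoef, hgain, hyx']
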